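/- Let 0 < ε < π, let α ≠ β be real numbers, and let n be a nonzero integer. Define φ on (−ε, ε) by φ(t) = αt for t ≤ 0 and φ(t) = βt for t ≥ 0, and let Δ_ε(t) = max(0, 1 − |t|/ε). Then for every integer k with k ≠ nα and k ≠ nβ, the Fourier coefficient of Δ_ε·e^{inφ} equals (1/2πi)(1/(nα−k) − 1/(nβ−k)) − (1/iε)[(1/(nα−k))·(e_{nα}1_{(−ε,0)})^(k) − (1/(nβ−k))·(e_{nβ}1_{(0,ε)})^(k)]. -/

import Mathlib

open MeasureTheory Filter

noncomputable def fourierCoef (f : ℝ → ℂ) (k : ℤ) : ℂ :=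
  (1 / (2 * Real.pi)) * ∫ t in (-Real.pi)..Real.pi, f t * Complex.exp (-(k : ℂ) * Complex.I * t)

noncomputable def partialFourierSum (f : ℝ → ℂ) (N : ℕ) (t : ℝ) : ℂ :=
  ∑ k ∈ Finset.Icc (-(N : ℤ)) (N : ℤ), fourierCoef f k * Complex.exp ((k : ℂ) * Complex.I * t)

noncomputable def uNorm (f : ℝ → ℂ) : ℝ :=
  ⨆ N : ℕ, ⨆ t : ℝ, ‖partialFourierSum f N t‖

lemma exp_integral (c : ℝ) (hc : c ≠ 0) (s u : ℝ) :
    ∫ t in s..u, Complex.exp (Complex.I * c * t)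
      = (Complex.exp (Complex.I * c * u) - Complex.exp (Complex.I * c * s)) / (Complex.I * c) := by
  have hc' : (Complex.I * c) ≠ 0 := by
    simp [Complex.I_ne_zero, Complex.ofReal_eq_zero, hc]
  simpa [mul_assoc] using integral_exp_mul_complex (a := s) (b := u) hc'

lemma texp_hasDeriv (c : ℝ) (t : ℝ) :
    HasDerivAt (fun s : ℝ =>
        ((s : ℂ) / (Complex.I * c) - 1 / (Complex.I * c) ^ 2) * Complex.exp (Complex.I * c * s))
      (((t : ℂ) / (Complex.I * c) - 1 / (Complex.I * c) ^ 2) * (Complex.I * c)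
          * Complex.exp (Complex.I * c * t)
        + (1 / (Complex.I * c)) * Complex.exp (Complex.I * c * t)) t := by
  set d : ℂ := Complex.I * c with hd
  have h1 : HasDerivAt (fun z : ℂ => (z / d - 1 / d ^ 2) * Complex.exp (d * z))
      (((t : ℂ) / d - 1 / d ^ 2) * (d * Complex.exp (d * (t : ℂ)))
        + (1 / d) * Complex.exp (d * (t : ℂ))) (t : ℂ) := by
    have hlin : HasDerivAt (fun z : ℂ => z / d - 1 / d ^ 2) (1 / d) (t : ℂ) := by
      exact ((hasDerivAt_id (t : ℂ)).div_const d).sub_const (1 / d ^ 2)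
    have hexp : HasDerivAt (fun z : ℂ => Complex.exp (d * z)) (d * Complex.exp (d * (t : ℂ)))
        (t : ℂ) := by
      simpa [mul_comm] using (((hasDerivAt_id (t : ℂ)).const_mul d).cexp)
    exact (hlin.mul hexp).congr_deriv (by ring)
  have := h1.comp_ofReal
  simpa [mul_comm, mul_left_comm, mul_assoc] using this

lemma texp_integral (c : ℝ) (hc : c ≠ 0) (s u : ℝ) :
    ∫ t in s..u, (t : ℂ) * Complex.exp (Complex.I * c * t)
      = ((u : ℂ) / (Complex.I * c) - 1 / (Complex.I * c) ^ 2) * Complex.exp (Complex.I * c * u)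
        - ((s : ℂ) / (Complex.I * c) - 1 / (Complex.I * c) ^ 2)
            * Complex.exp (Complex.I * c * s) := by
  have hc' : (Complex.I * (c : ℂ)) ≠ 0 := by
    simp [Complex.I_ne_zero, Complex.ofReal_eq_zero, hc]
  apply intervalIntegral.integral_eq_sub_of_hasDerivAt
  · intro t _
    have := texp_hasDeriv c t
    refine this.congr_deriv ?_
    have hcC : (c : ℂ) ≠ 0 := Complex.ofReal_ne_zero.mpr hc
    field_simp
    ring
  · apply Continuous.intervalIntegrable
    fun_prop

/-- Fourier coefficient of the indicator of `Ioo s u` times `exp(I c t)`. -/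
lemma indicator_coef (s u : ℝ) (hs : -Real.pi < s) (hsu : s < u) (hu : u ≤ Real.pi)
    (c : ℝ) (k : ℤ) :
    fourierCoef (fun t => if t ∈ Set.Ioo s u then Complex.exp (Complex.I * (c * t : ℝ)) else 0) k
      = (1 / (2 * (Real.pi : ℂ))) * ∫ t in s..u, Complex.exp (Complex.I * (c - k : ℝ) * t) := by
  unfold fourierCoef
  have h1 : ∀ t : ℝ,
      (if t ∈ Set.Ioo s u then Complex.exp (Complex.I * (c * t : ℝ)) else 0)
          * Complex.exp (-(k : ℂ) * Complex.I * t)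
        = Set.indicator (Set.Ioo s u) (fun t : ℝ => Complex.exp (Complex.I * (c - k : ℝ) * t)) t := by
    intro t
    by_cases h : t ∈ Set.Ioo s u
    · simp only [h, if_true, Set.indicator_of_mem h]
      rw [← Complex.exp_add]
      congr 1
      push_cast
      ring
    · simp [h]
  have hππ : (-Real.pi : ℝ) ≤ Real.pi := by linarith [Real.pi_pos]
  rw [intervalIntegral.integral_congr (g := fun t =>
        Set.indicator (Set.Ioo s u) (fun t : ℝ => Complex.exp (Complex.I * (c - k : ℝ) * t)) t)
      (fun t _ => h1 t)]
  rw [intervalIntegral.integral_of_le hππ, MeasureTheory.setIntegral_indicator measurableSet_Ioo]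
  have hsub : Set.Ioc (-Real.pi) Real.pi ∩ Set.Ioo s u = Set.Ioo s u := by
    apply Set.inter_eq_self_of_subset_right
    intro t ht
    exact ⟨by linarith [ht.1], by linarith [ht.2]⟩
  rw [hsub, ← MeasureTheory.integral_Ioc_eq_integral_Ioo,
      ← intervalIntegral.integral_of_le hsu.le]


lemma final_algebra (i a b e p Ea Eb : ℂ) (hi : i ≠ 0) (ha : a ≠ 0) (hb : b ≠ 0)
    (he : e ≠ 0) (hp : p ≠ 0) :
    1/(2*p) * ((0 + ((1 - Ea)/(i*a)
        + 1/e * ((0/(i*a) - 1/(i*a)^2) * 1 - ((-e)/(i*a) - 1/(i*a)^2) * Ea)))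
      + (((Eb - 1)/(i*b) - 1/e * ((e/(i*b) - 1/(i*b)^2) * Eb - (0/(i*b) - 1/(i*b)^2) * 1)) + 0))
    = 1/(2*p*i) * (1/a - 1/b)
      - 1/(i*e) * (1/a * (1/(2*p) * ((1 - Ea)/(i*a))) - 1/b * (1/(2*p) * ((Eb - 1)/(i*b)))) := by
  linear_combination ((1/2 : ℂ) * Ea * i⁻¹ * a⁻¹ * p⁻¹
    - (1/2 : ℂ) * Eb * i⁻¹ * b⁻¹ * p⁻¹) * mul_inv_cancel₀ he

set_option maxHeartbeats 1000000 in
theorem triangle_exp_fourier_coef_formula (ε α β : ℝ) (hε0 : 0 < ε) (hεπ : ε < Real.pi)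
    (hαβ : α ≠ β) (n : ℤ) (hn : n ≠ 0) (k : ℤ)
    (hkα : (k : ℝ) ≠ (n : ℝ) * α) (hkβ : (k : ℝ) ≠ (n : ℝ) * β) :
    fourierCoef (fun t => ((max 0 (1 - |t| / ε) : ℝ) : ℂ) *
        Complex.exp (Complex.I * (n : ℂ) * (if t ≤ 0 then α * t else β * t : ℝ))) k =
      (1 / (2 * (Real.pi : ℂ) * Complex.I)) *
          ((1 / (((n : ℝ) * α - (k : ℝ) : ℝ) : ℂ)) - (1 / (((n : ℝ) * β - (k : ℝ) : ℝ) : ℂ)))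
        - (1 / (Complex.I * (ε : ℂ))) *
          ((1 / (((n : ℝ) * α - (k : ℝ) : ℝ) : ℂ)) *
              fourierCoef (fun t => if t ∈ Set.Ioo (-ε) 0 then
                Complex.exp (Complex.I * ((n : ℝ) * α * t : ℝ)) else 0) k
            - (1 / (((n : ℝ) * β - (k : ℝ) : ℝ) : ℂ)) *
              fourierCoef (fun t => if t ∈ Set.Ioo 0 ε then
                Complex.exp (Complex.I * ((n : ℝ) * β * t : ℝ)) else 0) k) := by
  have hπ := Real.pi_pos
  set a : ℝ := (n : ℝ) * α - k with ha_def
  set b : ℝ := (n : ℝ) * β - k with hb_def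
  have ha : a ≠ 0 := sub_ne_zero.mpr hkα.symm
  have hb : b ≠ 0 := sub_ne_zero.mpr hkβ.symm
  -- indicator coefficients
  have hAco := indicator_coef (-ε) 0 (by linarith) (by linarith) (by linarith) ((n : ℝ) * α) k
  have hBco := indicator_coef 0 ε (by linarith) hε0 (by linarith) ((n : ℝ) * β) k
  rw [← ha_def] at hAco
  rw [← hb_def] at hBco
  -- continuity of the full integrand
  have hφ : Continuous fun t : ℝ => if t ≤ 0 then α * t else β * t := by
    apply Continuous.if_le (by fun_prop) (by fun_prop) continuous_id continuous_const
    intro x hx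
    simp only [id_eq] at hx
    subst hx
    ring
  have hcont : Continuous fun t : ℝ => (((max 0 (1 - |t| / ε) : ℝ) : ℂ) *
      Complex.exp (Complex.I * (n : ℂ) * ((if t ≤ 0 then α * t else β * t : ℝ) : ℂ)))
      * Complex.exp (-(k : ℂ) * Complex.I * t) := by
    apply Continuous.mul
    · apply Continuous.mul
      · exact Complex.continuous_ofReal.comp (continuous_const.max (by continuity))
      · exact Complex.continuous_exp.comp
          (continuous_const.mul (Complex.continuous_ofReal.comp hφ))
    · exact Complex.continuous_exp.comp (continuous_const.mul Complex.continuous_ofReal)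
  have hεC : (ε : ℂ) ≠ 0 := Complex.ofReal_ne_zero.mpr hε0.ne'
  -- outer pieces vanish
  have hzero1 : (∫ t in (-Real.pi)..(-ε),
      (((max 0 (1 - |t| / ε) : ℝ) : ℂ) *
        Complex.exp (Complex.I * (n : ℂ) * ((if t ≤ 0 then α * t else β * t : ℝ) : ℂ)))
        * Complex.exp (-(k : ℂ) * Complex.I * t)) = 0 := by
    rw [intervalIntegral.integral_congr (g := fun _ => (0 : ℂ)) ?_]
    · simp
    · intro t ht
      rw [Set.uIcc_of_le (by linarith)] at ht
      obtain ⟨h1, h2⟩ := ht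
      have hmax : max 0 (1 - |t| / ε) = 0 := by
        apply max_eq_left
        rw [abs_of_nonpos (by linarith), sub_nonpos, le_div_iff₀ hε0, one_mul]
        linarith
      simp [hmax]
  have hzero2 : (∫ t in ε..Real.pi,
      (((max 0 (1 - |t| / ε) : ℝ) : ℂ) *
        Complex.exp (Complex.I * (n : ℂ) * ((if t ≤ 0 then α * t else β * t : ℝ) : ℂ)))
        * Complex.exp (-(k : ℂ) * Complex.I * t)) = 0 := by
    rw [intervalIntegral.integral_congr (g := fun _ => (0 : ℂ)) ?_]
    · simp
    · intro t ht
      rw [Set.uIcc_of_le (by linarith)] at ht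
      obtain ⟨h1, h2⟩ := ht
      have hmax : max 0 (1 - |t| / ε) = 0 := by
        apply max_eq_left
        rw [abs_of_nonneg (by linarith), sub_nonpos, le_div_iff₀ hε0, one_mul]
        linarith
      simp [hmax]
  -- middle pieces
  have hmid1 : (∫ t in (-ε)..(0 : ℝ),
      (((max 0 (1 - |t| / ε) : ℝ) : ℂ) *
        Complex.exp (Complex.I * (n : ℂ) * ((if t ≤ 0 then α * t else β * t : ℝ) : ℂ)))
        * Complex.exp (-(k : ℂ) * Complex.I * t))
      = (∫ t in (-ε)..(0 : ℝ), Complex.exp (Complex.I * a * t))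
        + (1 / (ε : ℂ)) * ∫ t in (-ε)..(0 : ℝ), (t : ℂ) * Complex.exp (Complex.I * a * t) := by
    rw [← intervalIntegral.integral_const_mul,
      ← intervalIntegral.integral_add ((by fun_prop : Continuous fun t : ℝ =>
          Complex.exp (Complex.I * a * t)).intervalIntegrable _ _)
        ((by fun_prop : Continuous fun t : ℝ =>
          (1 / (ε : ℂ)) * ((t : ℂ) * Complex.exp (Complex.I * a * t))).intervalIntegrable _ _)]
    apply intervalIntegral.integral_congr
    intro t ht
    rw [Set.uIcc_of_le (by linarith)] at ht
    obtain ⟨h1, h2⟩ := ht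
    have hmax : max 0 (1 - |t| / ε) = 1 + t / ε := by
      have h3 : (0 : ℝ) ≤ 1 - (-t) / ε := by
        rw [sub_nonneg, div_le_one hε0]; linarith
      rw [abs_of_nonpos h2, max_eq_right h3, neg_div, sub_neg_eq_add]
    have hif : (if t ≤ 0 then α * t else β * t) = α * t := if_pos h2
    dsimp only
    have hexp : Complex.exp (Complex.I * (n : ℂ) * ((α * t : ℝ) : ℂ))
        * Complex.exp (-(k : ℂ) * Complex.I * t) = Complex.exp (Complex.I * a * t) := by
      rw [← Complex.exp_add]
      congr 1
      push_cast [ha_def]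
      ring
    rw [hmax, hif, mul_assoc, hexp]
    push_cast
    field_simp [hεC]
  have hmid2 : (∫ t in (0 : ℝ)..ε,
      (((max 0 (1 - |t| / ε) : ℝ) : ℂ) *
        Complex.exp (Complex.I * (n : ℂ) * ((if t ≤ 0 then α * t else β * t : ℝ) : ℂ)))
        * Complex.exp (-(k : ℂ) * Complex.I * t))
      = (∫ t in (0 : ℝ)..ε, Complex.exp (Complex.I * b * t))
        - (1 / (ε : ℂ)) * ∫ t in (0 : ℝ)..ε, (t : ℂ) * Complex.exp (Complex.I * b * t) := by
    rw [← intervalIntegral.integral_const_mul,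
      ← intervalIntegral.integral_sub ((by fun_prop : Continuous fun t : ℝ =>
          Complex.exp (Complex.I * b * t)).intervalIntegrable _ _)
        ((by fun_prop : Continuous fun t : ℝ =>
          (1 / (ε : ℂ)) * ((t : ℂ) * Complex.exp (Complex.I * b * t))).intervalIntegrable _ _)]
    apply intervalIntegral.integral_congr
    intro t ht
    rw [Set.uIcc_of_le (by linarith)] at ht
    obtain ⟨h1, h2⟩ := ht
    have hmax : max 0 (1 - |t| / ε) = 1 - t / ε := by
      have h3 : (0 : ℝ) ≤ 1 - t / ε := by
        rw [sub_nonneg, div_le_one hε0]; linarith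
      rw [abs_of_nonneg h1, max_eq_right h3]
    have hif : (if t ≤ 0 then α * t else β * t) = β * t := by
      rcases eq_or_lt_of_le h1 with h | h
      · simp [← h]
      · rw [if_neg (not_le.mpr h)]
    dsimp only
    have hexp : Complex.exp (Complex.I * (n : ℂ) * ((β * t : ℝ) : ℂ))
        * Complex.exp (-(k : ℂ) * Complex.I * t) = Complex.exp (Complex.I * b * t) := by
      rw [← Complex.exp_add]
      congr 1
      push_cast [hb_def]
      ring
    rw [hmax, hif, mul_assoc, hexp]
    push_cast
    field_simp [hεC]
  -- assemble the left-hand side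
  rw [hAco, hBco]
  simp only [fourierCoef]
  rw [← intervalIntegral.integral_add_adjacent_intervals (a := -Real.pi) (b := 0)
      (c := Real.pi) (hcont.intervalIntegrable _ _) (hcont.intervalIntegrable _ _),
    ← intervalIntegral.integral_add_adjacent_intervals (a := -Real.pi) (b := -ε)
      (c := 0) (hcont.intervalIntegrable _ _) (hcont.intervalIntegrable _ _),
    ← intervalIntegral.integral_add_adjacent_intervals (a := (0 : ℝ)) (b := ε)
      (c := Real.pi) (hcont.intervalIntegrable _ _) (hcont.intervalIntegrable _ _),
    hzero1, hzero2, hmid1, hmid2]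
  rw [exp_integral a ha, exp_integral b hb, texp_integral a ha, texp_integral b hb]
  have haC : (a : ℂ) ≠ 0 := Complex.ofReal_ne_zero.mpr ha
  have hbC : (b : ℂ) ≠ 0 := Complex.ofReal_ne_zero.mpr hb
  have hπC : (Real.pi : ℂ) ≠ 0 := Complex.ofReal_ne_zero.mpr hπ.ne'
  simp only [Complex.ofReal_zero, mul_zero, Complex.exp_zero, Complex.ofReal_neg]
  linear_combination final_algebra Complex.I (a : ℂ) (b : ℂ) (ε : ℂ) (Real.pi : ℂ)
    (Complex.exp (Complex.I * (a : ℂ) * (-(ε : ℂ)))) (Complex.exp (Complex.I * (b : ℂ) * (ε : ℂ)))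
    Complex.I_ne_zero haC hbC hεC hπC
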